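/- Let Σ = (T, Q, Tr) be a NCMS, Tr₀ the set of its initial trajectories, and Tr' the set of all restrictions s|_I of trajectories s ∈ Tr₀ to intervals I ∈ 𝔗 with I ⊆ dom(s). Then Tr' is Markovian: if s₁, s₂ ∈ Tr' with t₀ = sup dom(s₁) = inf dom(s₂), both defined at t₀ with s₁(t₀) = s₂(t₀), then the gluing of s₁ and s₂ belongs to Tr'. -/
import Mathlib


open Set

/-- Partial functions from the time scale `T = [0,∞) ⊆ ℝ` to `Q`, represented as
`ℝ → Option Q` (the graph is `{(t,v) | s t = some v}`). -/
abbrev PF (Q : Type*) := ℝ → Option Q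

/-- Domain of a partial function. -/
def pdom {Q : Type*} (s : PF Q) : Set ℝ := {t | s t ≠ none}

/-- Range of a partial function. -/
def pran {Q : Type*} (s : PF Q) : Set Q := {q | ∃ t, s t = some q}

/-- Graph inclusion `s₁ ⊑ s₂`. -/
def ple {Q : Type*} (s₁ s₂ : PF Q) : Prop := ∀ t v, s₁ t = some v → s₂ t = some v

/-- `A ∈ 𝔗`: an interval (order-connected subset) of `T = [0,∞)` with more than one point. -/
def IsTimeInterval (A : Set ℝ) : Prop :=
  A ⊆ Ici (0 : ℝ) ∧ A.OrdConnected ∧ A.Nontrivial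

/-- A (partial) trajectory: a partial function whose domain belongs to `𝔗`. -/
def IsTraj {Q : Type*} (s : PF Q) : Prop := IsTimeInterval (pdom s)

open Classical in
/-- Restriction `s|_A` of a partial function to a set. -/
noncomputable def prestrict {Q : Type*} (s : PF Q) (A : Set ℝ) : PF Q :=
  fun t => if t ∈ A then s t else none

/-- Gluing: `s₁` on `pdom s₁`, `s₂` elsewhere. -/
def pglue {Q : Type*} (s₁ s₂ : PF Q) : PF Q := fun t => (s₁ t).orElse (fun _ => s₂ t)

/-- Closed under proper restrictions. -/
def CPR {Q : Type*} (Tr : Set (PF Q)) : Prop :=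
  ∀ s ∈ Tr, ∀ A : Set ℝ, IsTimeInterval A → A ⊆ pdom s → prestrict s A ∈ Tr

/-- The Markovian property. -/
def Markovian {Q : Type*} (Tr : Set (PF Q)) : Prop :=
  ∀ s₁ ∈ Tr, ∀ s₂ ∈ Tr, ∀ t₀ : ℝ,
    IsLUB (pdom s₁) t₀ → IsGLB (pdom s₂) t₀ →
    t₀ ∈ pdom s₁ → t₀ ∈ pdom s₂ → s₁ t₀ = s₂ t₀ →
    pglue s₁ s₂ ∈ Tr

/-- `s` is a supremum of `C` in the poset `(·, ⊑)`. -/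
def IsSupOf {Q : Type*} (C : Set (PF Q)) (s : PF Q) : Prop :=
  (∀ c ∈ C, ple c s) ∧ ∀ u : PF Q, (∀ c ∈ C, ple c u) → ple s u

/-- Completeness: every nonempty chain in `(Tr, ⊑)` has a supremum in `Tr`. -/
def Complete {Q : Type*} (Tr : Set (PF Q)) : Prop :=
  ∀ C ⊆ Tr, C.Nonempty → IsChain ple C → ∃ s ∈ Tr, IsSupOf C s

/-- `(T, S, Tr)` is a nondeterministic complete Markovian system. -/
structure IsNCMS {Q : Type*} (S : Set Q) (Tr : Set (PF Q)) : Prop where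
  valued : ∀ s ∈ Tr, pran s ⊆ S
  traj : ∀ s ∈ Tr, IsTraj s
  cpr : CPR Tr
  markov : Markovian Tr
  complete : Complete Tr

/-- `(T,S',Tr')` is a sub-NCMS of `(T,S,Tr)`. -/
def SubNCMS {Q : Type*} (S' : Set Q) (Tr' : Set (PF Q)) (S : Set Q) (Tr : Set (PF Q)) : Prop :=
  IsNCMS S' Tr' ∧ S' ⊆ S ∧ Tr' ⊆ Tr

/-- A trajectory is initial if it is defined at time `0`. -/
def Initial {Q : Type*} (s : PF Q) : Prop := 0 ∈ pdom s

/-- `s₂` is a backward extension of `s₁`: `s₁ ⊏ s₂` (proper graph inclusion) and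
`t₂ ≤ t₁` for all `(t₁,t₂) ∈ dom s₁ × dom s₂`. -/
def BackExt {Q : Type*} (s₁ s₂ : PF Q) : Prop :=
  ple s₁ s₂ ∧ ¬ ple s₂ s₁ ∧ ∀ t₁ ∈ pdom s₁, ∀ t₂ ∈ pdom s₂, t₂ ≤ t₁

/-- `s₂` is a `τ`-backward escape from `s` at time `d`: `s₂ : [c,d] → Q`, `c < d`,
`τ = d - c`, `s₂ d = s d`. -/
def BackEscape {Q : Type*} (s s₂ : PF Q) (d τ : ℝ) : Prop :=
  ∃ c : ℝ, c < d ∧ τ = d - c ∧ pdom s₂ = Icc c d ∧ s₂ d = s d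

/-- A function of class `K` on `ℝ₊`: continuous, strictly increasing, `f 0 = 0`,
nonnegative-valued. -/
def ClassK (f : ℝ → ℝ) : Prop :=
  ContinuousOn f (Ici 0) ∧ StrictMonoOn f (Ici 0) ∧ f 0 = 0 ∧
    ∀ x ∈ Ici (0 : ℝ), f x ∈ Ici (0 : ℝ)

/-- `f`-backward extensibility of a trajectory set. -/
def FBackExt {Q : Type*} (f : ℝ → ℝ) (Tr : Set (PF Q)) : Prop :=
  ∀ s ∈ Tr,
    Initial s ∨
    (∃ s' ∈ Tr, BackExt s s') ∨
    ((¬ ∃ m, IsLeast (pdom s) m) ∧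
      ∃ s' ∈ Tr, ∃ t ∈ pdom s, (∃ t' ∈ pdom s, t < t') ∧
        ∃ τ : ℝ, f (t - sInf (pdom s)) ≤ τ ∧ BackEscape s s' t τ)

/-- The `t₀`-reach set. -/
def ReachSet {Q : Type*} (Tr : Set (PF Q)) (t₀ : ℝ) : Set Q :=
  {q | ∃ s ∈ Tr, Initial s ∧ ∃ t ∈ pdom s ∩ Icc 0 t₀, s t = some q}

/-- The `t₀`-right range set. -/
def RightRange {Q : Type*} (Tr : Set (PF Q)) (t₀ : ℝ) : Set Q :=
  {q | ∃ s ∈ Tr, pdom s ⊆ Icc 0 t₀ ∧ ∃ b, IsGreatest (pdom s) b ∧ s b = some q}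

/-- All restrictions of initial trajectories of `Tr` to intervals in `𝔗` contained
in their domains. -/
def Restrictions {Q : Type*} (Tr : Set (PF Q)) : Set (PF Q) :=
  {s' | ∃ s ∈ Tr, Initial s ∧ ∃ A : Set ℝ, IsTimeInterval A ∧ A ⊆ pdom s ∧ s' = prestrict s A}

theorem pdom_prestrict_eq {Q : Type*} (s : PF Q) (A : Set ℝ) (h : A ⊆ pdom s) :
    pdom (prestrict s A) = A := by
  ext t
  by_cases ht : t ∈ A <;> simp [pdom, prestrict, ht]
  exact h ht

/-- the set of restrictions of initial trajectories is Markovian. -/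
theorem stmt_3 {Q : Type*} (S : Set Q) (Tr : Set (PF Q)) (h : IsNCMS S Tr) :
    Markovian (Restrictions Tr) := by
  rintro s₁ ⟨r₁, hr₁, hr₁i, A₁, hA₁, hA₁s, rfl⟩ s₂ ⟨r₂, hr₂, hr₂i, A₂, hA₂, hA₂s, rfl⟩
    t₀ hlub hglb ht₁ ht₂ hval
  have hd₁ : pdom (prestrict r₁ A₁) = A₁ := pdom_prestrict_eq _ _ hA₁s
  have hd₂ : pdom (prestrict r₂ A₂) = A₂ := pdom_prestrict_eq _ _ hA₂s
  rw [hd₁] at hlub ht₁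
  rw [hd₂] at hglb ht₂
  have hs₂Tr : prestrict r₂ A₂ ∈ Tr := h.cpr r₂ hr₂ A₂ hA₂ hA₂s
  -- t₀ > 0
  have ht₀pos : 0 < t₀ := by
    obtain ⟨a, ha, b, hb, hab⟩ := hA₁.2.2
    have ha' := hlub.1 ha; have hb' := hlub.1 hb
    have ha0 := hA₁.1 ha; have hb0 := hA₁.1 hb
    rcases lt_or_gt_of_ne hab with hl | hl
    · exact lt_of_le_of_lt ha0 (lt_of_lt_of_le hl hb')
    · exact lt_of_le_of_lt hb0 (lt_of_lt_of_le hl ha')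
  set A₁' : Set ℝ := pdom r₁ ∩ Iic t₀ with hA₁'def
  have htraj := h.traj r₁ hr₁
  have h0A₁' : (0 : ℝ) ∈ A₁' := ⟨hr₁i, le_of_lt ht₀pos⟩
  have ht₀A₁' : t₀ ∈ A₁' := ⟨hA₁s ht₁, le_refl t₀⟩
  have hA₁'int : IsTimeInterval A₁' := by
    refine ⟨fun t ht => htraj.1 ht.1, htraj.2.1.inter ordConnected_Iic, ?_⟩
    exact ⟨0, h0A₁', t₀, ht₀A₁', ht₀pos.ne⟩
  have hA₁'sub : A₁' ⊆ pdom r₁ := inter_subset_left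
  have hr₁' : prestrict r₁ A₁' ∈ Tr := h.cpr r₁ hr₁ A₁' hA₁'int hA₁'sub
  have hd₁' : pdom (prestrict r₁ A₁') = A₁' := pdom_prestrict_eq _ _ hA₁'sub
  have hA₁sub' : A₁ ⊆ A₁' := fun t ht => ⟨hA₁s ht, hlub.1 ht⟩
  -- glue r₁' with s₂
  have hg : pglue (prestrict r₁ A₁') (prestrict r₂ A₂) ∈ Tr := by
    refine h.markov _ hr₁' _ hs₂Tr t₀ ?_ ?_ ?_ ?_ ?_
    · rw [hd₁']
      exact IsGreatest.isLUB ⟨ht₀A₁', fun x hx => hx.2⟩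
    · rw [hd₂]; exact hglb
    · rw [hd₁']; exact ht₀A₁'
    · rw [hd₂]; exact ht₂
    · simpa [prestrict, ht₀A₁', ht₁] using hval
  refine ⟨pglue (prestrict r₁ A₁') (prestrict r₂ A₂), hg, ?_, A₁ ∪ A₂, ?_, ?_, ?_⟩
  · -- Initial
    have : r₁ 0 ≠ none := hr₁i
    simp only [Initial, pdom, pglue, prestrict, h0A₁', if_true, mem_setOf_eq]
    cases hc : r₁ 0 with
    | none => exact absurd hc this
    | some v => simp [Option.orElse]
  · -- time interval
    refine ⟨?_, ?_, ?_⟩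
    · rintro t (ht | ht)
      exacts [hA₁.1 ht, hA₂.1 ht]
    · constructor
      rintro x (hx | hx) y (hy | hy) z hz
      · exact Or.inl (hA₁.2.1.out hx hy hz)
      · rcases le_total z t₀ with hle | hle
        · exact Or.inl (hA₁.2.1.out hx ht₁ ⟨hz.1, hle⟩)
        · exact Or.inr (hA₂.2.1.out ht₂ hy ⟨hle, hz.2⟩)
      · have hzz : z = t₀ := le_antisymm (hz.2.trans (hlub.1 hy)) ((hglb.1 hx).trans hz.1)
        exact Or.inl (hzz ▸ ht₁)
      · exact Or.inr (hA₂.2.1.out hx hy hz)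
    · obtain ⟨a, ha, b, hb, hab⟩ := hA₁.2.2
      exact ⟨a, Or.inl ha, b, Or.inl hb, hab⟩
  · -- A₁ ∪ A₂ ⊆ pdom of the glue
    rintro t (ht | ht)
    · have htA₁' : t ∈ A₁' := hA₁sub' ht
      have : r₁ t ≠ none := hA₁s ht
      simp only [pdom, pglue, prestrict, htA₁', if_true, mem_setOf_eq]
      cases hc : r₁ t with
      | none => exact absurd hc this
      | some v => simp [Option.orElse]
    · have hb : prestrict r₂ A₂ t ≠ none := by
        simp only [prestrict, if_pos ht]; exact hA₂s ht
      simp only [pdom, pglue, mem_setOf_eq]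
      cases hc : prestrict r₁ A₁' t with
      | none => simpa [hc, Option.orElse] using hb
      | some v => simp [hc, Option.orElse]
  · -- equality
    funext t
    simp only [pglue, prestrict]
    by_cases htA₁ : t ∈ A₁
    · have htA₁' : t ∈ A₁' := hA₁sub' htA₁
      simp [htA₁, htA₁', Or.inl htA₁]
    · by_cases htA₂ : t ∈ A₂
      · have htt₀ : t₀ ≤ t := hglb.1 htA₂
        have htne : t ≠ t₀ := fun hh => htA₁ (hh ▸ ht₁)
        have htA₁' : t ∉ A₁' := fun hc => htne (le_antisymm hc.2 htt₀)
        simp [htA₁, htA₂, htA₁', Or.inr htA₂, Option.orElse]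
      · have : t ∉ A₁ ∪ A₂ := fun hc => hc.elim htA₁ htA₂
        simp [htA₁, htA₂, this, Option.orElse]
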